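/- For every p : ℕ and every n : ℕ, the order-3 p-Fuss-Catalan number satisfies (3n+1) · T p n = Nat.choose (3n+1) n · p^(2n+1); equivalently, T p n = (1/(3n+1)) · choose (3n+1) n · p^(2n+1). -/
import Mathlib

/-- Generalized order-3 Fuss-Catalan numbers `B(n,a) = (a/(a+3n)) * C(a+3n, n)`,
written subtraction-free as `C(a+3n,n) - 3*C(a+3n-1,n-1)` in `ℤ`. -/
def fcB : ℕ → ℕ → ℤ
  | 0, _ => 1
  | n + 1, a => (Nat.choose (a + 3 * n + 3) (n + 1) : ℤ) - 3 * Nat.choose (a + 3 * n + 2) n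

lemma fcB_zero (a : ℕ) : fcB 0 a = 1 := rfl

lemma fcB_succ (n a : ℕ) :
    fcB (n + 1) a = (Nat.choose (a + 3 * n + 3) (n + 1) : ℤ) - 3 * Nat.choose (a + 3 * n + 2) n :=
  rfl

lemma fcB_zero_right (n : ℕ) : fcB (n + 1) 0 = 0 := by
  have h : (3 * n + 3) * Nat.choose (3 * n + 2) n =
      Nat.choose (3 * n + 3) (n + 1) * (n + 1) := by
    simpa [Nat.succ_eq_add_one, show 3 * n + 2 + 1 = 3 * n + 3 by omega]
      using Nat.add_one_mul_choose_eq (3 * n + 2) n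
  have hcast : ((3 : ℤ) * n + 3) * (Nat.choose (3 * n + 2) n : ℤ) =
      (Nat.choose (3 * n + 3) (n + 1) : ℤ) * ((n : ℤ) + 1) := by exact_mod_cast h
  have h0 : ((Nat.choose (3 * n + 3) (n + 1) : ℤ) - 3 * Nat.choose (3 * n + 2) n)
      * ((n : ℤ) + 1) = 0 := by linear_combination (-1 : ℤ) * hcast
  have hne : ((n : ℤ) + 1) ≠ 0 := by positivity
  have h1 := (mul_eq_zero.mp h0).resolve_right hne
  rw [fcB_succ, show (0 : ℕ) + 3 * n + 3 = 3 * n + 3 by omega,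
    show (0 : ℕ) + 3 * n + 2 = 3 * n + 2 by omega]
  exact h1

/-- The Pascal-type recurrence for generalized Fuss-Catalan numbers. -/
lemma fcB_pascal (n a : ℕ) : fcB (n + 1) (a + 1) = fcB (n + 1) a + fcB n (a + 3) := by
  cases n with
  | zero =>
      rw [fcB_succ, fcB_succ, fcB_zero]
      simp only [Nat.mul_zero, Nat.add_zero]
      rw [show a + 1 + 3 = a + 4 by omega, show a + 1 + 2 = a + 3 by omega,
        Nat.choose_one_right, Nat.choose_one_right, Nat.choose_zero_right,
        Nat.choose_zero_right]
      push_cast; ring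
  | succ m =>
      rw [fcB_succ, fcB_succ, fcB_succ]
      -- goal: C(a+3m+7,m+2) - 3C(a+3m+6,m+1) = (C(a+3m+6,m+2) - 3C(a+3m+5,m+1))
      --        + (C(a+3m+6,m+1) - 3C(a+3m+5,m))
      rw [show a + 1 + 3 * (m + 1) + 3 = (a + 3 * m + 6) + 1 by omega,
        show a + 1 + 3 * (m + 1) + 2 = a + 3 * m + 6 by omega,
        show a + 3 * (m + 1) + 3 = a + 3 * m + 6 by omega,
        show a + 3 * (m + 1) + 2 = a + 3 * m + 5 by omega,
        show a + 3 + 3 * m + 3 = (a + 3 * m + 5) + 1 by omega,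
        show a + 3 + 3 * m + 2 = a + 3 * m + 5 by omega]
      have h1 := Nat.choose_succ_succ (a + 3 * m + 6) (m + 1)
      have h2 := Nat.choose_succ_succ (a + 3 * m + 5) m
      rw [h1, h2]
      push_cast
      ring

lemma fcB_step (m a : ℕ) :
    fcB m (a + 1) = fcB m a + (if m = 0 then 0 else fcB (m - 1) (a + 3)) := by
  cases m with
  | zero => simp [fcB_zero]
  | succ k => simp only [Nat.succ_ne_zero, if_false, Nat.succ_sub_one]; exact fcB_pascal k a

/-- Convolution identity: `∑ B(k,1) B(n-k,a) = B(n,a+1)`. -/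
lemma fcB_conv (n : ℕ) : ∀ a : ℕ,
    (∑ k ∈ Finset.range (n + 1), fcB k 1 * fcB (n - k) a) = fcB n (a + 1) := by
  induction n with
  | zero => intro a; simp [fcB_zero]
  | succ n ihn =>
      intro a
      induction a with
      | zero =>
          rw [Finset.sum_eq_single_of_mem (n + 1) (Finset.self_mem_range_succ (n + 1))]
          · simp [fcB_zero, fcB_succ]
          · intro k hk hkne
            have hk' : k ≤ n := by
              have := Finset.mem_range.mp hk; omega
            have hm : n + 1 - k = (n - k) + 1 := by omega
            rw [hm, fcB_zero_right, mul_zero]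
      | succ a iha =>
          have : (∑ k ∈ Finset.range (n + 1 + 1), fcB k 1 * fcB (n + 1 - k) (a + 1)) =
              (∑ k ∈ Finset.range (n + 1 + 1), fcB k 1 * fcB (n + 1 - k) a) +
              (∑ k ∈ Finset.range (n + 1 + 1), fcB k 1 *
                (if n + 1 - k = 0 then 0 else fcB (n + 1 - k - 1) (a + 3))) := by
            rw [← Finset.sum_add_distrib]
            refine Finset.sum_congr rfl fun k _ => ?_
            rw [fcB_step (n + 1 - k) a]
            ring
          rw [this, iha]
          have h2 : (∑ k ∈ Finset.range (n + 1 + 1), fcB k 1 *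
              (if n + 1 - k = 0 then 0 else fcB (n + 1 - k - 1) (a + 3))) =
              fcB n (a + 3 + 1) := by
            rw [Finset.sum_range_succ]
            simp only [Nat.sub_self, if_pos, mul_zero, add_zero]
            rw [← ihn (a + 3)]
            refine Finset.sum_congr rfl fun k hk => ?_
            have hk' : k ≤ n := by have := Finset.mem_range.mp hk; omega
            rw [if_neg (by omega), show n + 1 - k - 1 = n - k by omega]
          rw [h2]
          exact (fcB_pascal n (a + 1)).symm

/-- Triple convolution identity. -/
lemma fcB_conv3 (n : ℕ) :
    (∑ i ∈ Finset.range (n + 1), ∑ j ∈ Finset.range (n - i + 1),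
      fcB i 1 * fcB j 1 * fcB (n - i - j) 1) = fcB n 3 := by
  have : ∀ i ∈ Finset.range (n + 1),
      (∑ j ∈ Finset.range (n - i + 1), fcB i 1 * fcB j 1 * fcB (n - i - j) 1) =
      fcB i 1 * fcB (n - i) 2 := by
    intro i _
    rw [← fcB_conv (n - i) 1, Finset.mul_sum]
    refine Finset.sum_congr rfl fun j _ => ?_
    ring
  calc (∑ i ∈ Finset.range (n + 1), ∑ j ∈ Finset.range (n - i + 1),
      fcB i 1 * fcB j 1 * fcB (n - i - j) 1)
      = ∑ i ∈ Finset.range (n + 1), fcB i 1 * fcB (n - i) 2 := Finset.sum_congr rfl this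
    _ = fcB n 3 := fcB_conv n 2

/-- `B(n+1,1) = B(n,3)`. -/
lemma fcB_bridge (n : ℕ) : fcB (n + 1) 1 = fcB n 3 := by
  cases n with
  | zero => simp [fcB_succ, fcB_zero]
  | succ m =>
      rw [fcB_succ, fcB_succ]
      rw [show 1 + 3 * (m + 1) + 3 = (3 * m + 6) + 1 by omega,
        show 1 + 3 * (m + 1) + 2 = 3 * m + 6 by omega,
        show 3 + 3 * m + 3 = 3 * m + 6 by omega,
        show 3 + 3 * m + 2 = 3 * m + 5 by omega]
      -- need: C(3m+7, m+2) - 3 C(3m+6, m+1) = C(3m+6, m+1) - 3 C(3m+5, m)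
      have h1 : Nat.choose (3 * m + 7) (m + 2) =
          Nat.choose (3 * m + 6) (m + 1) + Nat.choose (3 * m + 6) (m + 2) := by
        rw [show 3 * m + 7 = (3 * m + 6) + 1 by omega, show m + 2 = (m + 1) + 1 by omega]
        exact Nat.choose_succ_succ' (3 * m + 6) (m + 1)
      have h2 : Nat.choose (3 * m + 6) (m + 2) =
          Nat.choose (3 * m + 5) (m + 1) + Nat.choose (3 * m + 5) (m + 2) := by
        rw [show 3 * m + 6 = (3 * m + 5) + 1 by omega, show m + 2 = (m + 1) + 1 by omega]
        exact Nat.choose_succ_succ' (3 * m + 5) (m + 1)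
      have h3 : Nat.choose (3 * m + 6) (m + 1) =
          Nat.choose (3 * m + 5) m + Nat.choose (3 * m + 5) (m + 1) := by
        rw [show 3 * m + 6 = (3 * m + 5) + 1 by omega]
        exact Nat.choose_succ_succ' (3 * m + 5) m
      -- C(3m+5, m+2) = 2 * C(3m+5, m+1)
      have h4 : Nat.choose (3 * m + 5) (m + 2) = 2 * Nat.choose (3 * m + 5) (m + 1) := by
        have h5 := Nat.choose_succ_right_eq (3 * m + 5) (m + 1)
        rw [show 3 * m + 5 - (m + 1) = 2 * (m + 2) by omega,
          show m + 1 + 1 = m + 2 by omega] at h5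
        have h7 : Nat.choose (3 * m + 5) (m + 2) * (m + 2) =
            2 * Nat.choose (3 * m + 5) (m + 1) * (m + 2) := by rw [h5]; ring
        exact Nat.eq_of_mul_eq_mul_right (by omega) h7
      rw [h1, h2, h3, h4]
      push_cast
      ring

/-- Closed form with multiplier: `(3n+1) * B(n,1) = C(3n+1, n)`. -/
lemma fcB_closed (n : ℕ) : (3 * n + 1 : ℤ) * fcB n 1 = Nat.choose (3 * n + 1) n := by
  cases n with
  | zero => simp [fcB_zero]
  | succ m =>
      rw [fcB_succ, show 1 + 3 * m + 3 = 3 * m + 4 by omega,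
        show 1 + 3 * m + 2 = 3 * m + 3 by omega,
        show 3 * (m + 1) + 1 = 3 * m + 4 by omega]
      have h : (3 * m + 4) * Nat.choose (3 * m + 3) m =
          Nat.choose (3 * m + 4) (m + 1) * (m + 1) := by
        simpa [Nat.succ_eq_add_one, show 3 * m + 3 + 1 = 3 * m + 4 by omega]
          using Nat.add_one_mul_choose_eq (3 * m + 3) m
      have hcast : ((3 : ℤ) * m + 4) * (Nat.choose (3 * m + 3) m : ℤ) =
          (Nat.choose (3 * m + 4) (m + 1) : ℤ) * ((m : ℤ) + 1) := by exact_mod_cast h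
      push_cast
      linear_combination (-3 : ℤ) * hcast

/-- The order-3 `p`-Fuss-Catalan numbers (defined by `T p 0 = p` and
`T p n = ∑_{i=0}^{n-1} ∑_{j=0}^{n-1-i} T p i · T p j · T p (n-1-i-j)` for `n ≥ 1`)
satisfy `(3n+1) · T p n = choose (3n+1) n · p^(2n+1)`. -/
theorem stmt11 (p : ℕ) (T : ℕ → ℕ) (hT0 : T 0 = p)
    (hT : ∀ n : ℕ, T (n + 1) =
      ∑ i ∈ Finset.range (n + 1), ∑ j ∈ Finset.range (n - i + 1),
        T i * T j * T (n - i - j))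
    (n : ℕ) :
    (3 * n + 1) * T n = Nat.choose (3 * n + 1) n * p ^ (2 * n + 1) := by
  have key : ∀ n : ℕ, (T n : ℤ) = (p : ℤ) ^ (2 * n + 1) * fcB n 1 := by
    intro n
    induction n using Nat.strong_induction_on with
    | _ n ih =>
      cases n with
      | zero => simp [hT0, fcB_zero]
      | succ m =>
          rw [hT m]
          push_cast
          have hsum : (∑ i ∈ Finset.range (m + 1), ∑ j ∈ Finset.range (m - i + 1),
              (T i : ℤ) * T j * T (m - i - j)) =
              (p : ℤ) ^ (2 * (m + 1) + 1) * (∑ i ∈ Finset.range (m + 1),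
                ∑ j ∈ Finset.range (m - i + 1), fcB i 1 * fcB j 1 * fcB (m - i - j) 1) := by
            rw [Finset.mul_sum]
            refine Finset.sum_congr rfl fun i hi => ?_
            rw [Finset.mul_sum]
            refine Finset.sum_congr rfl fun j hj => ?_
            have hi' : i ≤ m := by have := Finset.mem_range.mp hi; omega
            have hj' : j ≤ m - i := by have := Finset.mem_range.mp hj; omega
            rw [ih i (by omega), ih j (by omega), ih (m - i - j) (by omega)]
            rw [show (2 * (m + 1) + 1) = (2 * i + 1) + ((2 * j + 1) + (2 * (m - i - j) + 1))
              by omega, pow_add, pow_add]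
            ring
          rw [hsum, fcB_conv3, ← fcB_bridge]
  have hz : ((3 * n + 1 : ℕ) : ℤ) * (T n : ℤ) =
      (Nat.choose (3 * n + 1) n : ℤ) * (p : ℤ) ^ (2 * n + 1) := by
    rw [key n]
    push_cast
    rw [show ((3 : ℤ) * n + 1) * ((p : ℤ) ^ (2 * n + 1) * fcB n 1) =
      (((3 : ℤ) * n + 1) * fcB n 1) * (p : ℤ) ^ (2 * n + 1) by ring, fcB_closed]
  exact_mod_cast hz
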